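/- If (n+1)/2 < k ≤ n−2, then the Schur square of the Euclidean dual code C_k(S,1,∞)^⊥ equals C_1 + C_{2n−2k+1}, where C_1 is the one-dimensional code spanned by (0,…,0,1) ∈ F_q^{n+1} and C_{2n−2k+1} = {(u_1² g(a_1), …, u_n² g(a_n), 0) : g ∈ F_q[x], deg g ≤ 2n−2k}. -/

import Mathlib

open Polynomial Finset

noncomputable section

/-- Hamming weight of a vector. -/
def wt {F : Type*} [Field F] {N : ℕ} (w : Fin N → F) : ℕ := Set.ncard {i | w i ≠ 0}

/-- The code `C_k(S,v,∞)` as a set of vectors of length `n+1`. -/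
def codeSet {F : Type*} [Field F] {n : ℕ} (a v : Fin n → F) (k : ℕ) :
    Set (Fin (n + 1) → F) :=
  {w | ∃ f : F[X], f.natDegree ≤ k ∧ f.coeff (k - 1) = 0 ∧
    w = Fin.snoc (fun i => v i * f.eval (a i)) (f.coeff k)}

/-- The Euclidean dual of a set of vectors. -/
def dualSet {F : Type*} [Field F] {N : ℕ} (C : Set (Fin N → F)) : Set (Fin N → F) :=
  {y | ∀ x ∈ C, ∑ i, x i * y i = 0}

/-- A (nonzero) code has minimum distance `d`: some nonzero codeword has weight `d`
and every nonzero codeword has weight at least `d`. -/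
def IsMinDist {F : Type*} [Field F] {N : ℕ} (C : Set (Fin N → F)) (d : ℕ) : Prop :=
  (∃ w ∈ C, w ≠ 0 ∧ wt w = d) ∧ ∀ w ∈ C, w ≠ 0 → d ≤ wt w

/-- `u i = ∏_{j ≠ i} (a i - a j)⁻¹`. -/
def uCoeff {F : Type*} [Field F] {n : ℕ} (a : Fin n → F) (i : Fin n) : F :=
  ∏ j ∈ Finset.univ.erase i, (a i - a j)⁻¹

/-- The set of Schur (componentwise) products of elements of two codes. -/
def schurSet {F : Type*} [Field F] {N : ℕ} (C D : Set (Fin N → F)) : Set (Fin N → F) :=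
  {w | ∃ c ∈ C, ∃ d ∈ D, w = c * d}

-- ### auxiliary lemmas

lemma lcBasis {F : Type*} [Field F] {n : ℕ} (a : Fin n → F) (ha : Function.Injective a)
    (i : Fin n) :
    (Lagrange.basis Finset.univ a i).leadingCoeff = ∏ j ∈ Finset.univ.erase i, (a i - a j)⁻¹ := by
  rw [Lagrange.basis, leadingCoeff_prod]
  refine Finset.prod_congr rfl fun j hj => ?_
  rw [Lagrange.basisDivisor, leadingCoeff_mul, leadingCoeff_C, leadingCoeff_X_sub_C, mul_one]

lemma keySum {F : Type*} [Field F] {n : ℕ} (a : Fin n → F) (ha : Function.Injective a)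
    (h : F[X]) (hd : h.degree < n) :
    ∑ i, uCoeff a i * h.eval (a i) = h.coeff (n-1) := by
  have hinj : Set.InjOn a (Finset.univ : Finset (Fin n)) := ha.injOn
  have hcard : (Finset.univ : Finset (Fin n)).card = n := by simp
  have heq : h = Lagrange.interpolate Finset.univ a (fun i => h.eval (a i)) :=
    Lagrange.eq_interpolate hinj (by simpa [hcard])
  conv_rhs => rw [heq]
  rw [Lagrange.interpolate_apply, finset_sum_coeff]
  refine Finset.sum_congr rfl fun i _ => ?_
  rw [coeff_C_mul]
  have hbd : (Lagrange.basis Finset.univ a i).natDegree = n - 1 := by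
    rw [Lagrange.natDegree_basis hinj (Finset.mem_univ i), hcard]
  rw [mul_comm]
  congr 1
  rw [← hbd, ← leadingCoeff, lcBasis a ha]
  rfl

lemma nodalNext {F : Type*} [Field F] {n : ℕ} (hn : 1 ≤ n) (a : Fin n → F) :
    (Lagrange.nodal Finset.univ a).coeff (n-1) = -∑ i, a i := by
  have hmon := Lagrange.nodal_monic (s := (Finset.univ : Finset (Fin n))) (v := a)
  have hdeg : (Lagrange.nodal Finset.univ a).natDegree = n := by simp [Lagrange.natDegree_nodal]
  have h2 : (Lagrange.nodal Finset.univ a).coeff (n-1)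
      = (Lagrange.nodal Finset.univ a).nextCoeff := by
    rw [nextCoeff_of_natDegree_pos (by omega), hdeg]
  rw [h2, Lagrange.nodal_eq, Monic.nextCoeff_prod _ _ (fun i _ => monic_X_sub_C _)]
  simp [nextCoeff_X_sub_C]

lemma coeffFG {F : Type*} [Field F] {n k : ℕ} (hk : 1 ≤ k) (hkn : k + 1 ≤ n)
    (f g : F[X]) (hf : f.natDegree ≤ k) (hf' : f.coeff (k-1) = 0) (hg : g.natDegree ≤ n - k) :
    (f * g).coeff (n - 1) = f.coeff k * g.coeff (n - k - 1) ∧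
    (f * g).coeff n = f.coeff k * g.coeff (n - k) := by
  constructor
  · rw [coeff_mul, Finset.sum_eq_single_of_mem (k, n - k - 1)
      (by rw [Finset.HasAntidiagonal.mem_antidiagonal]; omega)]
    rintro ⟨i, j⟩ hij hne
    rw [Finset.HasAntidiagonal.mem_antidiagonal] at hij
    simp only at hij
    show f.coeff i * g.coeff j = 0
    rcases lt_trichotomy i k with hi | hi | hi
    · rcases Nat.lt_or_ge i (k-1) with hi' | hi'
      · rw [coeff_eq_zero_of_natDegree_lt (p := g) (by omega), mul_zero]
      · rw [show i = k - 1 by omega, hf', zero_mul]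
    · exact absurd (Prod.ext hi (by omega)) hne
    · rw [coeff_eq_zero_of_natDegree_lt (p := f) (by omega), zero_mul]
  · rw [coeff_mul, Finset.sum_eq_single_of_mem (k, n - k)
      (by rw [Finset.HasAntidiagonal.mem_antidiagonal]; omega)]
    rintro ⟨i, j⟩ hij hne
    rw [Finset.HasAntidiagonal.mem_antidiagonal] at hij
    simp only at hij
    show f.coeff i * g.coeff j = 0
    rcases lt_trichotomy i k with hi | hi | hi
    · rw [coeff_eq_zero_of_natDegree_lt (p := g) (by omega), mul_zero]
    · exact absurd (Prod.ext hi (by omega)) hne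
    · rw [coeff_eq_zero_of_natDegree_lt (p := f) (by omega), zero_mul]

lemma sumFG {F : Type*} [Field F] {n k : ℕ} (hk : 1 ≤ k) (hkn : k + 1 ≤ n)
    (a : Fin n → F) (ha : Function.Injective a)
    (f g : F[X]) (hf : f.natDegree ≤ k) (hf' : f.coeff (k-1) = 0) (hg : g.natDegree ≤ n - k) :
    ∑ i, uCoeff a i * (f.eval (a i) * g.eval (a i)) =
      f.coeff k * (g.coeff (n - k - 1) + (∑ i, a i) * g.coeff (n - k)) := by
  set L := Lagrange.nodal (Finset.univ : Finset (Fin n)) a with hL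
  have hLdeg : L.natDegree = n := by simp [hL, Lagrange.natDegree_nodal]
  have hLmon : L.Monic := Lagrange.nodal_monic
  have hfg : (f * g).natDegree ≤ n := le_trans (natDegree_mul_le) (by omega)
  set h := f * g - C ((f * g).coeff n) * L with hh
  have hdeg : h.degree < n := by
    rw [degree_lt_iff_coeff_zero]
    intro m hm
    have hm' : (n : ℕ) ≤ m := by exact_mod_cast hm
    rcases eq_or_lt_of_le hm' with he | hlt
    · rw [hh, coeff_sub, coeff_C_mul, ← he, ← hLdeg, hLmon.coeff_natDegree, mul_one, sub_self]
    · rw [hh, coeff_sub, coeff_C_mul,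
        coeff_eq_zero_of_natDegree_lt (by omega : (f*g).natDegree < m),
        coeff_eq_zero_of_natDegree_lt (by omega : L.natDegree < m), mul_zero, sub_zero]
  have heval : ∀ i, h.eval (a i) = f.eval (a i) * g.eval (a i) := by
    intro i
    rw [hh, eval_sub, eval_mul, eval_mul, eval_C,
      Lagrange.eval_nodal_at_node (Finset.mem_univ i), mul_zero, sub_zero]
  calc ∑ i, uCoeff a i * (f.eval (a i) * g.eval (a i))
      = ∑ i, uCoeff a i * h.eval (a i) := by
        refine Finset.sum_congr rfl fun i _ => by rw [heval]
    _ = h.coeff (n-1) := keySum a ha h hdeg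
    _ = (f*g).coeff (n-1) - (f*g).coeff n * L.coeff (n-1) := by
        rw [hh, coeff_sub, coeff_C_mul]
    _ = f.coeff k * g.coeff (n - k - 1) - f.coeff k * g.coeff (n - k) * (-∑ i, a i) := by
        rw [(coeffFG hk hkn f g hf hf' hg).1, (coeffFG hk hkn f g hf hf' hg).2,
          nodalNext (by omega) a]
    _ = f.coeff k * (g.coeff (n - k - 1) + (∑ i, a i) * g.coeff (n - k)) := by ring

lemma uNe {F : Type*} [Field F] {n : ℕ} (a : Fin n → F) (ha : Function.Injective a) (i : Fin n) :
    uCoeff a i ≠ 0 := by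
  refine Finset.prod_ne_zero_iff.mpr fun j hj => ?_
  have : a i ≠ a j := fun h => (Finset.mem_erase.mp hj).1 (ha h).symm
  exact inv_ne_zero (sub_ne_zero.mpr this)

lemma dualFwd {F : Type*} [Field F] {n k : ℕ} (hk : 1 ≤ k) (hkn : k + 1 ≤ n)
    (a : Fin n → F) (ha : Function.Injective a) (g : F[X]) (hg : g.natDegree ≤ n - k) :
    Fin.snoc (fun i => uCoeff a i * g.eval (a i))
      (-(g.coeff (n-k-1) + (∑ i, a i) * g.coeff (n-k))) ∈ dualSet (codeSet a 1 k) := by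
  rintro x ⟨f, hf1, hf2, rfl⟩
  rw [Fin.sum_univ_castSucc]
  simp only [Fin.snoc_castSucc, Fin.snoc_last, Pi.one_apply, one_mul]
  have hs := sumFG hk hkn a ha f g hf1 hf2 hg
  have h1 : ∀ i, f.eval (a i) * (uCoeff a i * g.eval (a i)) =
      uCoeff a i * (f.eval (a i) * g.eval (a i)) := fun i => by ring
  simp_rw [h1, hs]
  ring

lemma dualBwd {F : Type*} [Field F] {n k : ℕ} (hk : 3 ≤ k) (hkn : k + 2 ≤ n)
    (a : Fin n → F) (ha : Function.Injective a) (y : Fin (n+1) → F)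
    (hy : y ∈ dualSet (codeSet a 1 k)) :
    ∃ g : F[X], g.natDegree ≤ n - k ∧
      y = Fin.snoc (fun i => uCoeff a i * g.eval (a i))
        (-(g.coeff (n-k-1) + (∑ i, a i) * g.coeff (n-k))) := by
  have hinj : Set.InjOn a (Finset.univ : Finset (Fin n)) := ha.injOn
  set g := Lagrange.interpolate Finset.univ a (fun i => (uCoeff a i)⁻¹ * y i.castSucc)
    with hgdef
  have hgd : g.degree < n := by
    have h := Lagrange.degree_interpolate_lt (fun i => (uCoeff a i)⁻¹ * y i.castSucc) hinj
    rwa [Finset.card_univ, Fintype.card_fin] at h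
  have hval : ∀ i, uCoeff a i * g.eval (a i) = y i.castSucc := by
    intro i
    rw [hgdef, Lagrange.eval_interpolate_at_node _ hinj (Finset.mem_univ i)]
    rw [← mul_assoc, mul_inv_cancel₀ (uNe a ha i), one_mul]
  have hmono : ∀ j, j ≤ k - 2 → ∑ i, uCoeff a i * ((X:F[X])^j * g).eval (a i) = 0 := by
    intro j hj
    have hmem : (Fin.snoc (fun i => (1:Fin n → F) i * ((X:F[X])^j).eval (a i))
        (((X:F[X])^j).coeff k) : Fin (n+1) → F) ∈ codeSet a 1 k :=
      ⟨X^j, by rw [natDegree_X_pow]; omega, by rw [coeff_X_pow, if_neg (by omega)], rfl⟩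
    have hc := hy _ hmem
    rw [Fin.sum_univ_castSucc] at hc
    simp only [Fin.snoc_castSucc, Fin.snoc_last, Pi.one_apply, one_mul,
      coeff_X_pow, if_neg (show ¬ k = j by omega), zero_mul, add_zero] at hc
    calc ∑ i, uCoeff a i * ((X:F[X])^j * g).eval (a i)
        = ∑ i, ((X:F[X])^j).eval (a i) * (uCoeff a i * g.eval (a i)) := by
          refine Finset.sum_congr rfl fun i _ => ?_
          rw [eval_mul]; ring
      _ = 0 := by simp_rw [hval]; exact hc
  have hzero : ∀ j, j ≤ k - 2 → g.coeff (n - 1 - j) = 0 := by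
    intro j
    induction j using Nat.strong_induction_on with
    | _ j IH =>
      intro hj
      have hdegXg : ((X:F[X])^j * g).degree < n := by
        rw [degree_lt_iff_coeff_zero]
        intro m hm
        have hm' : n ≤ m := by exact_mod_cast hm
        rw [coeff_X_pow_mul', if_pos (by omega)]
        rcases Nat.lt_or_ge (m - j) n with hmn | hmn
        · rw [show m - j = n - 1 - (n - 1 - (m - j)) by omega]
          exact IH _ (by omega) (by omega)
        · exact coeff_eq_zero_of_degree_lt (lt_of_lt_of_le hgd (by exact_mod_cast hmn))
      have hks := keySum a ha _ hdegXg
      rw [hmono j hj] at hks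
      rw [coeff_X_pow_mul', if_pos (by omega)] at hks
      exact hks.symm
  have hgnat : g.natDegree ≤ n - k := by
    rw [natDegree_le_iff_coeff_eq_zero]
    intro m hm
    rcases Nat.lt_or_ge m n with hmn | hmn
    · rw [show m = n - 1 - (n - 1 - m) by omega]
      exact hzero _ (by omega)
    · exact coeff_eq_zero_of_degree_lt (lt_of_lt_of_le hgd (by exact_mod_cast hmn))
  have hlast : y (Fin.last n) = -(g.coeff (n-k-1) + (∑ i, a i) * g.coeff (n-k)) := by
    have hmem : (Fin.snoc (fun i => (1:Fin n → F) i * ((X:F[X])^k).eval (a i))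
        (((X:F[X])^k).coeff k) : Fin (n+1) → F) ∈ codeSet a 1 k :=
      ⟨X^k, le_of_eq (natDegree_X_pow k), by rw [coeff_X_pow, if_neg (by omega)], rfl⟩
    have hc := hy _ hmem
    rw [Fin.sum_univ_castSucc] at hc
    simp only [Fin.snoc_castSucc, Fin.snoc_last, Pi.one_apply, one_mul,
      coeff_X_pow, eq_self_iff_true, if_true] at hc
    have hs := sumFG (by omega : 1 ≤ k) (by omega : k + 1 ≤ n) a ha ((X:F[X])^k) g
      (le_of_eq (natDegree_X_pow k)) (by rw [coeff_X_pow, if_neg (by omega)]) hgnat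
    rw [coeff_X_pow, if_pos rfl, one_mul] at hs
    have heq : ∑ i, ((X:F[X])^k).eval (a i) * y i.castSucc =
        g.coeff (n-k-1) + (∑ i, a i) * g.coeff (n-k) := by
      rw [← hs]
      refine Finset.sum_congr rfl fun i _ => ?_
      rw [← hval i]; ring
    rw [heq] at hc
    linear_combination hc
  refine ⟨g, hgnat, ?_⟩
  funext x
  induction x using Fin.lastCases with
  | last => rw [Fin.snoc_last, hlast]
  | cast i => rw [Fin.snoc_castSucc, hval i]

-- snoc algebra helpers
lemma snoc_mul {F : Type*} [Field F] {n : ℕ} (p q : Fin n → F) (x y : F) :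
    (Fin.snoc p x : Fin (n+1) → F) * Fin.snoc q y = Fin.snoc (p * q) (x * y) := by
  funext z
  induction z using Fin.lastCases with
  | last => simp
  | cast i => simp

lemma snoc_sub {F : Type*} [Field F] {n : ℕ} (p q : Fin n → F) (x y : F) :
    (Fin.snoc p x : Fin (n+1) → F) - Fin.snoc q y = Fin.snoc (p - q) (x - y) := by
  funext z
  induction z using Fin.lastCases with
  | last => simp
  | cast i => simp

lemma snoc_split {F : Type*} [Field F] {n : ℕ} (p : Fin n → F) (x : F) :
    (Fin.snoc p x : Fin (n+1) → F) =
      x • (Fin.snoc (0 : Fin n → F) 1 : Fin (n+1) → F) + (Fin.snoc p 0 : Fin (n+1) → F) := by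
  funext z
  induction z using Fin.lastCases with
  | last => simp
  | cast i => simp

theorem stmt8 {F : Type*} [Field F] [Fintype F] (n k : ℕ)
    (hk3 : 3 ≤ k) (hk2n : n + 1 < 2 * k) (hkn : k + 2 ≤ n) (hnq : n ≤ Fintype.card F)
    (a : Fin n → F) (ha : Function.Injective a) :
    Submodule.span F
        (schurSet (dualSet (codeSet a (1 : Fin n → F) k))
          (dualSet (codeSet a (1 : Fin n → F) k))) =
      Submodule.span F ({Fin.snoc (0 : Fin n → F) 1} : Set (Fin (n + 1) → F)) ⊔
        Submodule.span F {w : Fin (n + 1) → F | ∃ g : F[X],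
          g.natDegree ≤ 2 * n - 2 * k ∧
          w = Fin.snoc (fun i => (uCoeff a i) ^ 2 * g.eval (a i)) 0} := by
  have hk1 : 1 ≤ k := by omega
  have hkn1 : k + 1 ≤ n := by omega
  have hnk2 : 2 ≤ n - k := by omega
  set D := dualSet (codeSet a (1 : Fin n → F) k) with hD
  -- the dual codeword attached to a polynomial
  have hcwmem : ∀ s : ℕ, s ≤ n - k →
      (Fin.snoc (fun i => uCoeff a i * ((X:F[X])^s).eval (a i))
        (-(((X:F[X])^s).coeff (n-k-1) + (∑ i, a i) * ((X:F[X])^s).coeff (n-k)))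
        : Fin (n+1) → F) ∈ D :=
    fun s hs => dualFwd hk1 hkn1 a ha _ (le_of_eq_of_le (natDegree_X_pow s) hs)
  -- lam values of monomials
  have lam1 : -(((X:F[X])^(n-k-1)).coeff (n-k-1) + (∑ i, a i) * ((X:F[X])^(n-k-1)).coeff (n-k))
      = -1 := by
    rw [coeff_X_pow, if_pos rfl, coeff_X_pow, if_neg (by omega)]; ring
  have lam2 : -(((X:F[X])^(n-k-2)).coeff (n-k-1) + (∑ i, a i) * ((X:F[X])^(n-k-2)).coeff (n-k))
      = 0 := by
    rw [coeff_X_pow, if_neg (by omega), coeff_X_pow, if_neg (by omega)]; ring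
  -- e∞ lies in the span of the Schur products
  have einf_mem : (Fin.snoc (0 : Fin n → F) 1 : Fin (n+1) → F) ∈
      Submodule.span F (schurSet D D) := by
    have hzerofun : ((fun i => uCoeff a i * eval (a i) ((X:F[X])^(n-k-1))) *
        (fun i => uCoeff a i * eval (a i) ((X:F[X])^(n-k-1)))) -
        ((fun i => uCoeff a i * eval (a i) ((X:F[X])^(n-k))) *
         (fun i => uCoeff a i * eval (a i) ((X:F[X])^(n-k-2)))) = (0 : Fin n → F) := by
      funext i
      simp only [Pi.mul_apply, Pi.sub_apply, Pi.zero_apply, eval_pow, eval_X]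
      have h1 : a i ^ (n-k) * a i ^ (n-k-2) = a i ^ (n-k-1) * a i ^ (n-k-1) := by
        rw [← pow_add, ← pow_add]; congr 1; omega
      linear_combination (-(uCoeff a i * uCoeff a i)) * h1
    have heq : (Fin.snoc (0 : Fin n → F) 1 : Fin (n+1) → F) =
        (Fin.snoc (fun i => uCoeff a i * ((X:F[X])^(n-k-1)).eval (a i))
          (-(((X:F[X])^(n-k-1)).coeff (n-k-1) + (∑ i, a i) * ((X:F[X])^(n-k-1)).coeff (n-k)))
          : Fin (n+1) → F) *
        (Fin.snoc (fun i => uCoeff a i * ((X:F[X])^(n-k-1)).eval (a i))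
          (-(((X:F[X])^(n-k-1)).coeff (n-k-1) + (∑ i, a i) * ((X:F[X])^(n-k-1)).coeff (n-k)))) -
        (Fin.snoc (fun i => uCoeff a i * ((X:F[X])^(n-k)).eval (a i))
          (-(((X:F[X])^(n-k)).coeff (n-k-1) + (∑ i, a i) * ((X:F[X])^(n-k)).coeff (n-k)))) *
        (Fin.snoc (fun i => uCoeff a i * ((X:F[X])^(n-k-2)).eval (a i))
          (-(((X:F[X])^(n-k-2)).coeff (n-k-1) + (∑ i, a i) * ((X:F[X])^(n-k-2)).coeff (n-k)))) := by
      rw [snoc_mul, snoc_mul, snoc_sub, lam1, lam2, hzerofun]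
      congr 1
      ring
    rw [heq]
    exact sub_mem
      (Submodule.subset_span ⟨_, hcwmem (n-k-1) (by omega), _, hcwmem (n-k-1) (by omega), rfl⟩)
      (Submodule.subset_span ⟨_, hcwmem (n-k) (by omega), _, hcwmem (n-k-2) (by omega), rfl⟩)
  -- monomial vectors lie in the span of the Schur products
  have hmono_mem : ∀ s : ℕ, s ≤ 2*n - 2*k →
      (Fin.snoc (fun i => uCoeff a i ^ 2 * a i ^ s) 0 : Fin (n+1) → F) ∈
        Submodule.span F (schurSet D D) := by
    intro s hs
    set s1 := min s (n-k) with hs1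
    set s2 := s - s1 with hs2
    have hs1le : s1 ≤ n - k := min_le_right _ _
    have hs2le : s2 ≤ n - k := by omega
    have hfun : ((fun i => uCoeff a i * eval (a i) ((X:F[X])^s1)) *
        (fun i => uCoeff a i * eval (a i) ((X:F[X])^s2))) =
        fun i => uCoeff a i ^ 2 * a i ^ s := by
      funext i
      simp only [Pi.mul_apply, eval_pow, eval_X]
      have h1 : a i ^ s1 * a i ^ s2 = a i ^ s := by rw [← pow_add]; congr 1; omega
      linear_combination (uCoeff a i * uCoeff a i) * h1
    have hprod : (Fin.snoc (fun i => uCoeff a i * ((X:F[X])^s1).eval (a i))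
          (-(((X:F[X])^s1).coeff (n-k-1) + (∑ i, a i) * ((X:F[X])^s1).coeff (n-k)))
          : Fin (n+1) → F) *
        (Fin.snoc (fun i => uCoeff a i * ((X:F[X])^s2).eval (a i))
          (-(((X:F[X])^s2).coeff (n-k-1) + (∑ i, a i) * ((X:F[X])^s2).coeff (n-k)))) =
        Fin.snoc (fun i => uCoeff a i ^ 2 * a i ^ s)
          ((-(((X:F[X])^s1).coeff (n-k-1) + (∑ i, a i) * ((X:F[X])^s1).coeff (n-k))) *
           (-(((X:F[X])^s2).coeff (n-k-1) + (∑ i, a i) * ((X:F[X])^s2).coeff (n-k)))) := by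
      rw [snoc_mul, hfun]
    have hsplit := snoc_split (fun i => uCoeff a i ^ 2 * a i ^ s)
      ((-(((X:F[X])^s1).coeff (n-k-1) + (∑ i, a i) * ((X:F[X])^s1).coeff (n-k))) *
       (-(((X:F[X])^s2).coeff (n-k-1) + (∑ i, a i) * ((X:F[X])^s2).coeff (n-k))))
    have : (Fin.snoc (fun i => uCoeff a i ^ 2 * a i ^ s) 0 : Fin (n+1) → F) =
        (Fin.snoc (fun i => uCoeff a i * ((X:F[X])^s1).eval (a i))
          (-(((X:F[X])^s1).coeff (n-k-1) + (∑ i, a i) * ((X:F[X])^s1).coeff (n-k)))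
          : Fin (n+1) → F) *
        (Fin.snoc (fun i => uCoeff a i * ((X:F[X])^s2).eval (a i))
          (-(((X:F[X])^s2).coeff (n-k-1) + (∑ i, a i) * ((X:F[X])^s2).coeff (n-k)))) -
        ((-(((X:F[X])^s1).coeff (n-k-1) + (∑ i, a i) * ((X:F[X])^s1).coeff (n-k))) *
         (-(((X:F[X])^s2).coeff (n-k-1) + (∑ i, a i) * ((X:F[X])^s2).coeff (n-k)))) •
          (Fin.snoc (0 : Fin n → F) 1 : Fin (n+1) → F) := by
      rw [hprod, hsplit]; abel
    rw [this]
    exact sub_mem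
      (Submodule.subset_span ⟨_, hcwmem s1 hs1le, _, hcwmem s2 hs2le, rfl⟩)
      (Submodule.smul_mem _ _ einf_mem)
  refine le_antisymm (Submodule.span_le.mpr ?_) (sup_le (Submodule.span_le.mpr ?_)
    (Submodule.span_le.mpr ?_))
  · -- forward inclusion
    rintro w ⟨c, hc, d, hd, rfl⟩
    obtain ⟨g, hgd, rfl⟩ := dualBwd hk3 hkn a ha c hc
    obtain ⟨h, hhd, rfl⟩ := dualBwd hk3 hkn a ha d hd
    rw [snoc_mul]
    have hcomp : (fun i => uCoeff a i * g.eval (a i)) * (fun i => uCoeff a i * h.eval (a i)) =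
        fun i => uCoeff a i ^ 2 * (g*h).eval (a i) := by
      funext i
      simp only [Pi.mul_apply, eval_mul]
      ring
    have hsplit2 := snoc_split (fun i => uCoeff a i ^ 2 * (g*h).eval (a i))
      (-(g.coeff (n-k-1) + (∑ i, a i) * g.coeff (n-k)) *
        -(h.coeff (n-k-1) + (∑ i, a i) * h.coeff (n-k)))
    rw [hcomp, hsplit2, SetLike.mem_coe]
    refine add_mem (Submodule.mem_sup_left ?_) (Submodule.mem_sup_right ?_)
    · exact Submodule.smul_mem _ _ (Submodule.subset_span (Set.mem_singleton _))
    · exact Submodule.subset_span ⟨g*h, le_trans natDegree_mul_le (by omega), rfl⟩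
  · -- e∞
    intro w hw
    rw [Set.mem_singleton_iff] at hw
    subst hw
    exact einf_mem
  · -- W
    rintro w ⟨g, hg, rfl⟩
    have hexp : (Fin.snoc (fun i => uCoeff a i ^ 2 * g.eval (a i)) 0 : Fin (n+1) → F) =
        ∑ s ∈ Finset.range (2*n - 2*k + 1), g.coeff s •
          (Fin.snoc (fun i => uCoeff a i ^ 2 * a i ^ s) 0 : Fin (n+1) → F) := by
      funext z
      rw [Finset.sum_apply]
      induction z using Fin.lastCases with
      | last => simp
      | cast i =>
        simp only [Fin.snoc_castSucc, Pi.smul_apply, smul_eq_mul]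
        rw [eval_eq_sum_range' (Nat.lt_succ_of_le hg), Finset.mul_sum]
        refine Finset.sum_congr rfl fun s _ => by ring
    rw [hexp]
    exact Submodule.sum_mem _ fun s hs =>
      Submodule.smul_mem _ _ (hmono_mem s (by simp at hs; omega))
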